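/- Let k ≥ 2 and let F = (a_{i,j}) be an SL_k-frieze over the reals (all adjacent k×k minors equal 1, bordered by k−1 diagonals of zeros and diagonals of ones as in the definition). If D_{1,j}^ℓ > 0 for all ℓ = 1,…,k−1 and j = 1,…,n (where n is the height), then D_{i,j}^ℓ > 0 for all i ∈ ℤ, ℓ = 1,…,k−1 and positions j inside the frieze; in particular F is generic, hence tame and periodic. -/

import Mathlib

open Matrix

section DJ
variable {R : Type*} [CommRing R]

variable {R : Type*} [CommRing R]

/-- det of identity with first and last columns replaced. -/
lemma det_id_two_cols (n : ℕ) (u w : Fin (n+2) → R) :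
    det (Matrix.of fun i j : Fin (n+2) =>
      if j = 0 then u i else if j = Fin.last (n+1) then w i else (1 : Matrix (Fin (n+2)) (Fin (n+2)) R) i j)
      = u 0 * w (Fin.last (n+1)) - w 0 * u (Fin.last (n+1)) := by
  have hlast : (Fin.last (n+1) : Fin (n+2)) ≠ 0 := by
    simp [Fin.ext_iff]
  set U : Matrix (Fin (n+2)) (Fin 2) R := Matrix.of fun i t =>
    if t = 0 then u i - (1 : Matrix (Fin (n+2)) (Fin (n+2)) R) i 0
    else w i - (1 : Matrix (Fin (n+2)) (Fin (n+2)) R) i (Fin.last (n+1)) with hU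
  set V : Matrix (Fin 2) (Fin (n+2)) R := Matrix.of fun t j =>
    if t = 0 then (if j = 0 then (1:R) else 0) else (if j = Fin.last (n+1) then 1 else 0) with hV
  have key : (Matrix.of fun i j : Fin (n+2) =>
      if j = 0 then u i else if j = Fin.last (n+1) then w i else (1 : Matrix (Fin (n+2)) (Fin (n+2)) R) i j)
      = 1 + U * V := by
    ext i j
    simp only [Matrix.of_apply, Matrix.add_apply, Matrix.mul_apply, hU, hV]
    rw [Fin.sum_univ_two]
    by_cases h0 : j = 0
    · subst h0
      simp [hlast, Matrix.one_apply]
    · by_cases hl : j = Fin.last (n+1)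
      · subst hl
        simp [hlast, Matrix.one_apply]
      · simp [h0, hl]
  have hVU : V * U = Matrix.of fun s t => U (if s = 0 then 0 else Fin.last (n+1)) t := by
    ext s t
    by_cases hs : s = 0 <;>
      simp [Matrix.mul_apply, hV, hs, ite_mul, Finset.sum_ite_eq']
  rw [key, det_one_add_mul_comm, det_fin_two]
  have h10 : (1 : Fin 2) ≠ 0 := by decide
  simp only [Matrix.add_apply, hVU, Matrix.of_apply, if_neg h10, if_pos rfl]
  simp [hU, Matrix.one_apply, hlast, hlast.symm, h10]

/-- det of a matrix whose first and last columns are concentrated at the corners. -/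
lemma det_corner_cols (n : ℕ) (A : Matrix (Fin (n+2)) (Fin (n+2)) R)
    (h0 : ∀ i, i ≠ 0 → A i 0 = 0)
    (hl : ∀ i, i ≠ Fin.last (n+1) → A i (Fin.last (n+1)) = 0) :
    det A = A 0 0 * A (Fin.last (n+1)) (Fin.last (n+1)) *
      det (A.submatrix (Fin.succ ∘ Fin.castSucc) (Fin.succ ∘ Fin.castSucc)) := by
  rw [det_succ_column_zero]
  rw [Finset.sum_eq_single 0]
  · rw [Fin.succAbove_zero]
    set B := A.submatrix Fin.succ Fin.succ with hB
    have hBdet : det B = A (Fin.last (n+1)) (Fin.last (n+1)) *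
        det (A.submatrix (Fin.succ ∘ Fin.castSucc) (Fin.succ ∘ Fin.castSucc)) := by
      rw [det_succ_column B (Fin.last n)]
      rw [Finset.sum_eq_single (Fin.last n)]
      · have h1 : B (Fin.last n) (Fin.last n) = A (Fin.last (n+1)) (Fin.last (n+1)) := by
          simp [hB, Fin.succ_last]
        have h2 : (Fin.last n).succAbove = Fin.castSucc := Fin.succAbove_last
        rw [h1, h2]
        have h3 : B.submatrix Fin.castSucc Fin.castSucc =
            A.submatrix (Fin.succ ∘ Fin.castSucc) (Fin.succ ∘ Fin.castSucc) := by
          ext r s; simp [hB]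
        rw [h3]
        have h4 : ((-1:R)) ^ (((Fin.last n):ℕ) + ((Fin.last n):ℕ)) = 1 := by
          rw [← two_mul, pow_mul]; norm_num
        rw [h4]; ring
      · intro i _ hi
        have : B i (Fin.last n) = 0 := by
          apply hl
          intro h
          apply hi
          have := Fin.succ_injective _ (h.trans (Fin.succ_last n).symm)
          exact this
        rw [this]; ring
      · intro h; exact absurd (Finset.mem_univ _) h
    rw [hBdet]
    norm_num
    ring
  · intro i _ hi
    rw [h0 i hi]; ring
  · intro h; exact absurd (Finset.mem_univ _) h

/-- Desnanot–Jacobi / Dodgson condensation. -/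
theorem det_desnanot_jacobi {n : ℕ} (M : Matrix (Fin (n+2)) (Fin (n+2)) R) :
    M.det * (M.submatrix (Fin.succ ∘ Fin.castSucc) (Fin.succ ∘ Fin.castSucc)).det =
      (M.submatrix Fin.castSucc Fin.castSucc).det * (M.submatrix Fin.succ Fin.succ).det -
      (M.submatrix Fin.castSucc Fin.succ).det * (M.submatrix Fin.succ Fin.castSucc).det := by
  have generic :
      (Matrix.mvPolynomialX (Fin (n+2)) (Fin (n+2)) ℤ).det *
        ((Matrix.mvPolynomialX (Fin (n+2)) (Fin (n+2)) ℤ).submatrix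
          (Fin.succ ∘ Fin.castSucc) (Fin.succ ∘ Fin.castSucc)).det =
      ((Matrix.mvPolynomialX (Fin (n+2)) (Fin (n+2)) ℤ).submatrix Fin.castSucc Fin.castSucc).det *
        ((Matrix.mvPolynomialX (Fin (n+2)) (Fin (n+2)) ℤ).submatrix Fin.succ Fin.succ).det -
      ((Matrix.mvPolynomialX (Fin (n+2)) (Fin (n+2)) ℤ).submatrix Fin.castSucc Fin.succ).det *
        ((Matrix.mvPolynomialX (Fin (n+2)) (Fin (n+2)) ℤ).submatrix Fin.succ Fin.castSucc).det := by
    set X := Matrix.mvPolynomialX (Fin (n+2)) (Fin (n+2)) ℤ with hXdef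
    have hX : X.det ≠ 0 := by rw [hXdef]; exact Matrix.det_mvPolynomialX_ne_zero _ _
    set u : Fin (n+2) → MvPolynomial (Fin (n+2) × Fin (n+2)) ℤ :=
      fun i => adjugate X i 0 with hu
    set w : Fin (n+2) → MvPolynomial (Fin (n+2) × Fin (n+2)) ℤ :=
      fun i => adjugate X i (Fin.last (n+1)) with hw
    set P : Matrix (Fin (n+2)) (Fin (n+2)) (MvPolynomial (Fin (n+2) × Fin (n+2)) ℤ) :=
      Matrix.of fun i j =>
      if j = 0 then u i else if j = Fin.last (n+1) then w i
      else (1 : Matrix (Fin (n+2)) (Fin (n+2)) (MvPolynomial (Fin (n+2) × Fin (n+2)) ℤ)) i j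
      with hP
    have hlast : (Fin.last (n+1) : Fin (n+2)) ≠ 0 := by simp [Fin.ext_iff]
    have hXP : ∀ i j, (X * P) i j =
        if j = 0 then X.det * (1 : Matrix (Fin (n+2)) (Fin (n+2)) _) i 0
        else if j = Fin.last (n+1) then
          X.det * (1 : Matrix (Fin (n+2)) (Fin (n+2)) _) i (Fin.last (n+1))
        else X i j := by
      intro i j
      by_cases h0 : j = 0
      · subst h0
        rw [if_pos rfl]
        have h : (X * P) i 0 = (X * adjugate X) i 0 := by
          simp only [Matrix.mul_apply]
          refine Finset.sum_congr rfl fun t _ => ?_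
          simp [hP, hu]
        rw [h, Matrix.mul_adjugate]
        simp
      · rw [if_neg h0]
        by_cases hl2 : j = Fin.last (n+1)
        · subst hl2
          rw [if_pos rfl]
          have h : (X * P) i (Fin.last (n+1)) = (X * adjugate X) i (Fin.last (n+1)) := by
            simp only [Matrix.mul_apply]
            refine Finset.sum_congr rfl fun t _ => ?_
            simp [hP, hw, hlast]
          rw [h, Matrix.mul_adjugate]
          simp
        · rw [if_neg hl2]
          have h : (X * P) i j =
              (X * (1 : Matrix (Fin (n+2)) (Fin (n+2))
                (MvPolynomial (Fin (n+2) × Fin (n+2)) ℤ))) i j := by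
            simp only [Matrix.mul_apply]
            refine Finset.sum_congr rfl fun t _ => ?_
            simp [hP, h0, hl2]
          rw [h, Matrix.mul_one]
    have hcorner : det (X * P) = X.det * X.det *
        det ((X * P).submatrix (Fin.succ ∘ Fin.castSucc) (Fin.succ ∘ Fin.castSucc)) := by
      have h0 : ∀ i, i ≠ 0 → (X * P) i 0 = 0 := by
        intro i hi; rw [hXP]; simp [Matrix.one_apply, hi]
      have hl : ∀ i, i ≠ Fin.last (n+1) → (X * P) i (Fin.last (n+1)) = 0 := by
        intro i hi; rw [hXP]; simp [Matrix.one_apply, hi, hlast]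
      have h := det_corner_cols n (X * P) h0 hl
      rw [h, hXP, hXP]
      simp [Matrix.one_apply, hlast]
    have hinner : (X * P).submatrix (Fin.succ ∘ Fin.castSucc) (Fin.succ ∘ Fin.castSucc) =
        X.submatrix (Fin.succ ∘ Fin.castSucc) (Fin.succ ∘ Fin.castSucc) := by
      ext r s
      have hs0 : (Fin.succ (Fin.castSucc s)) ≠ (0 : Fin (n+2)) := Fin.succ_ne_zero _
      have hsl : (Fin.succ (Fin.castSucc s)) ≠ Fin.last (n+1) := by
        intro hEq
        have := congrArg Fin.val hEq
        simp at this
        omega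
      simp only [Matrix.submatrix_apply, Function.comp_apply]
      rw [hXP, if_neg hs0, if_neg hsl]
    have hdetP : det P = u 0 * w (Fin.last (n+1)) - w 0 * u (Fin.last (n+1)) :=
      det_id_two_cols n u w
    have hmain : X.det * X.det * det (X.submatrix (Fin.succ ∘ Fin.castSucc)
        (Fin.succ ∘ Fin.castSucc)) = X.det * det P := by
      rw [← hinner, ← hcorner]
      exact det_mul X P
    rw [hdetP] at hmain
    have hpow : ((-1 : MvPolynomial (Fin (n+2) × Fin (n+2)) ℤ)) ^
        (((Fin.last (n+1)) : ℕ) + ((Fin.last (n+1)) : ℕ)) = 1 := by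
      rw [← two_mul, pow_mul]; norm_num
    have hu0 : u 0 = det (X.submatrix Fin.succ Fin.succ) := by
      rw [hu]
      simp only
      rw [adjugate_fin_succ_eq_det_submatrix]
      simp [Fin.succAbove_zero]
    have hwl : w (Fin.last (n+1)) = det (X.submatrix Fin.castSucc Fin.castSucc) := by
      rw [hw]
      simp only
      rw [adjugate_fin_succ_eq_det_submatrix, Fin.succAbove_last, hpow, one_mul]
    have hw0 : w 0 = (-1 : MvPolynomial (Fin (n+2) × Fin (n+2)) ℤ) ^ (n+1) *
        det (X.submatrix Fin.castSucc Fin.succ) := by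
      rw [hw]
      simp only
      rw [adjugate_fin_succ_eq_det_submatrix]
      rw [Fin.succAbove_last, Fin.succAbove_zero]
      simp [Fin.val_last]
    have hul : u (Fin.last (n+1)) = (-1 : MvPolynomial (Fin (n+2) × Fin (n+2)) ℤ) ^ (n+1) *
        det (X.submatrix Fin.succ Fin.castSucc) := by
      rw [hu]
      simp only
      rw [adjugate_fin_succ_eq_det_submatrix]
      rw [Fin.succAbove_last, Fin.succAbove_zero]
      simp [Fin.val_last]
    rw [hu0, hwl, hw0, hul] at hmain
    have hsq : ((-1 : MvPolynomial (Fin (n+2) × Fin (n+2)) ℤ) ^ (n+1)) *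
        ((-1 : MvPolynomial (Fin (n+2) × Fin (n+2)) ℤ) ^ (n+1)) = 1 := by
      rw [← pow_add, ← two_mul, pow_mul]; norm_num
    apply mul_left_cancel₀ hX
    rw [← mul_assoc, hmain]
    have h2 : ((-1 : MvPolynomial (Fin (n+2) × Fin (n+2)) ℤ) ^ (n+1) *
          det (X.submatrix Fin.castSucc Fin.succ)) *
        ((-1 : MvPolynomial (Fin (n+2) × Fin (n+2)) ℤ) ^ (n+1) *
          det (X.submatrix Fin.succ Fin.castSucc)) =
        det (X.submatrix Fin.castSucc Fin.succ) * det (X.submatrix Fin.succ Fin.castSucc) := by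
      rw [mul_mul_mul_comm, hsq, one_mul]
    rw [h2]
    ring
  -- transfer to an arbitrary commutative ring
  set f : MvPolynomial (Fin (n+2) × Fin (n+2)) ℤ →+* R :=
    (MvPolynomial.eval₂Hom (Int.castRingHom R) (fun p : Fin (n+2) × Fin (n+2) => M p.1 p.2))
    with hf
  have hmap : (Matrix.mvPolynomialX (Fin (n+2)) (Fin (n+2)) ℤ).map f = M := by
    ext i j
    simp [hf, Matrix.mvPolynomialX_apply]
  have happ := congrArg f generic
  simp only [map_sub, _root_.map_mul] at happ
  have hdet : ∀ (m : ℕ) (r c : Fin m → Fin (n+2)),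
      f (((Matrix.mvPolynomialX (Fin (n+2)) (Fin (n+2)) ℤ).submatrix r c).det)
        = (M.submatrix r c).det := by
    intro m r c
    rw [RingHom.map_det]
    congr 1
    ext i j
    simp [hf, Matrix.mvPolynomialX_apply]
  have hdet0 : f ((Matrix.mvPolynomialX (Fin (n+2)) (Fin (n+2)) ℤ).det) = M.det := by
    rw [RingHom.map_det]
    congr 1
  simp only [hdet0, hdet] at happ
  exact happ

end DJ

/-- The ℓ×ℓ adjacent minor of the real array `a` at position `(i,j)`. -/
noncomputable def adjMinor (a : ℤ → ℤ → ℝ) (ℓ : ℕ) (i j : ℤ) : ℝ :=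
  Matrix.det (Matrix.of fun r s : Fin ℓ => a (i + (r : ℤ)) (j + (s : ℤ)))

lemma adjMinor_zero (a : ℤ → ℤ → ℝ) (i j : ℤ) : adjMinor a 0 i j = 1 :=
  Matrix.det_fin_zero

/-- Dodgson condensation for adjacent minors. -/
lemma adjMinor_dj (a : ℤ → ℤ → ℝ) (t : ℕ) (i j : ℤ) :
    adjMinor a (t+2) i j * adjMinor a t (i+1) (j+1) =
      adjMinor a (t+1) i j * adjMinor a (t+1) (i+1) (j+1) -
      adjMinor a (t+1) i (j+1) * adjMinor a (t+1) (i+1) j := by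
  have h := det_desnanot_jacobi
    (M := Matrix.of fun r s : Fin (t+2) => a (i + (r : ℤ)) (j + (s : ℤ)))
  have h1 : (Matrix.of fun r s : Fin (t+2) => a (i + (r : ℤ)) (j + (s : ℤ))).submatrix
      Fin.castSucc Fin.castSucc
      = Matrix.of fun r s : Fin (t+1) => a (i + (r : ℤ)) (j + (s : ℤ)) := by
    ext r s; simp
  have h2 : (Matrix.of fun r s : Fin (t+2) => a (i + (r : ℤ)) (j + (s : ℤ))).submatrix
      Fin.succ Fin.succ
      = Matrix.of fun r s : Fin (t+1) => a ((i+1) + (r : ℤ)) ((j+1) + (s : ℤ)) := by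
    ext r s
    simp only [Matrix.submatrix_apply, Matrix.of_apply, Fin.val_succ]
    congr 1 <;> push_cast <;> ring
  have h3 : (Matrix.of fun r s : Fin (t+2) => a (i + (r : ℤ)) (j + (s : ℤ))).submatrix
      Fin.castSucc Fin.succ
      = Matrix.of fun r s : Fin (t+1) => a (i + (r : ℤ)) ((j+1) + (s : ℤ)) := by
    ext r s
    simp only [Matrix.submatrix_apply, Matrix.of_apply, Fin.val_succ, Fin.coe_castSucc]
    congr 1 <;> push_cast <;> ring
  have h4 : (Matrix.of fun r s : Fin (t+2) => a (i + (r : ℤ)) (j + (s : ℤ))).submatrix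
      Fin.succ Fin.castSucc
      = Matrix.of fun r s : Fin (t+1) => a ((i+1) + (r : ℤ)) (j + (s : ℤ)) := by
    ext r s
    simp only [Matrix.submatrix_apply, Matrix.of_apply, Fin.val_succ, Fin.coe_castSucc]
    congr 1 <;> push_cast <;> ring
  have h5 : (Matrix.of fun r s : Fin (t+2) => a (i + (r : ℤ)) (j + (s : ℤ))).submatrix
      (Fin.succ ∘ Fin.castSucc) (Fin.succ ∘ Fin.castSucc)
      = Matrix.of fun r s : Fin t => a ((i+1) + (r : ℤ)) ((j+1) + (s : ℤ)) := by
    ext r s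
    simp only [Matrix.submatrix_apply, Matrix.of_apply, Function.comp_apply, Fin.val_succ,
      Fin.coe_castSucc]
    congr 1 <;> push_cast <;> ring
  rw [h1, h2, h3, h4, h5] at h
  exact h

/-- cancel an invertible matrix in `vecMul`. -/
lemma vecMul_eq_zero_of_det_one {m : ℕ} (T : Matrix (Fin m) (Fin m) ℝ) (hT : T.det = 1)
    (z : Fin m → ℝ) (h : z ᵥ* T = 0) : z = 0 := by
  have hU : IsUnit T.det := by rw [hT]; exact isUnit_one
  have h2 : (z ᵥ* T) ᵥ* T⁻¹ = (0 : Fin m → ℝ) ᵥ* T⁻¹ := by rw [h]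
  rw [Matrix.vecMul_vecMul, Matrix.mul_nonsing_inv _ hU, Matrix.vecMul_one,
    Matrix.zero_vecMul] at h2
  exact h2
/-- Let `F = (a i j)` be an SL_k-frieze of height `n` over ℝ: in the coordinates
used here, row `i` has a `1` at columns `i` and `i + n + 1`, interior entries at
columns `i+1, …, i+n`, zeros at the `k-1` following columns, and the rows are
extended with period `n+k+1` and sign `(-1)^{k-1}`; all adjacent `k×k` minors are `1`.
If `D_{1,j}^ℓ > 0` for `ℓ = 1,…,k-1` and `j = 1,…,n`, then `D_{i,·}^ℓ > 0` at all
interior positions of all rows; in particular `F` is generic, hence tame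
(all adjacent `(k+1)×(k+1)` minors vanish) and periodic with period `n+k+1`. -/
theorem positivity_propagates (k n : ℕ) (hk : 2 ≤ k) (hn : 1 ≤ n) (a : ℤ → ℤ → ℝ)
    (hone : ∀ i : ℤ, a i i = 1)
    (hone' : ∀ i : ℤ, a i (i + ((n : ℤ) + 1)) = 1)
    (hzero : ∀ i j : ℤ, i + ((n : ℤ) + 1) < j → j < i + ((n : ℤ) + (k : ℤ) + 1) → a i j = 0)
    (hext : ∀ i j : ℤ, a i (j + ((n : ℤ) + (k : ℤ) + 1)) = (-1 : ℝ) ^ (k - 1) * a i j)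
    (hSL : ∀ i j : ℤ, adjMinor a k i j = 1)
    (hpos : ∀ ℓ j : ℕ, 1 ≤ ℓ → ℓ ≤ k - 1 → 1 ≤ j → j ≤ n →
      0 < adjMinor a ℓ 1 (1 + (j : ℤ))) :
    (∀ (i : ℤ) (ℓ j : ℕ), 1 ≤ ℓ → ℓ ≤ k - 1 → 1 ≤ j → j ≤ n →
      0 < adjMinor a ℓ i (i + (j : ℤ))) ∧
    (∀ i j : ℤ, adjMinor a (k + 1) i j = 0) ∧
    (∀ i j : ℤ, a (i + ((n : ℤ) + (k : ℤ) + 1)) (j + ((n : ℤ) + (k : ℤ) + 1)) = a i j) := by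
  set N : ℤ := (n : ℤ) + (k : ℤ) + 1 with hN
  set ε : ℝ := (-1 : ℝ) ^ (k - 1) with hε
  have hε2 : ε * ε = 1 := by
    rw [hε, ← pow_add, ← two_mul, pow_mul]; norm_num
  have hεne : ε ≠ 0 := by
    intro h; rw [h] at hε2; norm_num at hε2
  -- zeros to the left of the diagonal
  have hleft : ∀ i j : ℤ, j < i → i < j + (k : ℤ) → a i j = 0 := by
    intro i j h1 h2
    have hz : a i (j + N) = 0 := by
      apply hzero <;> [skip; skip] <;> omega
    have := hext i j
    rw [hz] at this
    exact (mul_eq_zero.mp this.symm).resolve_left hεne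
  -- the ℓ×ℓ minor with NW corner on the diagonal of 1s equals 1
  have hdiag : ∀ ℓ : ℕ, ℓ ≤ k → ∀ i : ℤ, adjMinor a ℓ i i = 1 := by
    intro ℓ hℓ i
    unfold adjMinor
    rw [Matrix.det_of_upperTriangular]
    · apply Finset.prod_eq_one
      intro r _
      simp only [Matrix.of_apply]
      exact hone _
    · intro r s hrs
      have hsr : (s : ℕ) < (r : ℕ) := hrs
      have hrl : (r : ℕ) < ℓ := r.isLt
      show a (i + (r : ℤ)) (i + (s : ℤ)) = 0
      apply hleft _ _ (by omega) (by omega)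
  -- the ℓ×ℓ minor with NE corner on the second diagonal of 1s equals 1
  have hright : ∀ ℓ : ℕ, ℓ ≤ k → ∀ i : ℤ, adjMinor a ℓ i (i + ((n : ℤ) + 1)) = 1 := by
    intro ℓ hℓ i
    unfold adjMinor
    rw [Matrix.det_of_lowerTriangular]
    · apply Finset.prod_eq_one
      intro r _
      simp only [Matrix.of_apply]
      have e : i + ((n : ℤ) + 1) + (r : ℤ) = (i + (r : ℤ)) + ((n : ℤ) + 1) := by ring
      rw [e]; exact hone' _
    · intro r s hrs
      have hrs' : (r : ℕ) < (s : ℕ) := hrs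
      have hsl : (s : ℕ) < ℓ := s.isLt
      show a (i + (r : ℤ)) (i + ((n : ℤ) + 1) + (s : ℤ)) = 0
      apply hzero _ _ (by omega) (by rw [hN]; omega)
  -- extended positivity predicate for a row
  set Q : ℤ → Prop := fun i => ∀ ℓ m : ℕ, ℓ ≤ k → m ≤ n + 1 →
    0 < adjMinor a ℓ i (i + (m : ℤ)) with hQdef
  -- generic handling of the boundary cases
  have hQbdry : ∀ (i : ℤ) (ℓ m : ℕ), ℓ ≤ k → m ≤ n + 1 →
      (ℓ = 0 ∨ ℓ = k ∨ m = 0 ∨ m = n + 1) → 0 < adjMinor a ℓ i (i + (m : ℤ)) := by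
    intro i ℓ m hℓ hm hcase
    rcases hcase with h | h | h | h
    · subst h; rw [adjMinor_zero]; norm_num
    · subst h; rw [hSL]; norm_num
    · subst h
      have e : i + ((0 : ℕ) : ℤ) = i := by push_cast; ring
      rw [e, hdiag ℓ hℓ]; norm_num
    · subst h
      have e : i + ((n + 1 : ℕ) : ℤ) = i + ((n : ℤ) + 1) := by push_cast; ring
      rw [e, hright ℓ hℓ]; norm_num
  have hQup : ∀ i : ℤ, Q i → Q (i + 1) := by
    intro i hQi
    rw [hQdef]
    intro ℓ
    induction ℓ using Nat.strong_induction_on with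
    | _ ℓ ihℓ =>
      intro m
      induction m using Nat.strong_induction_on with
      | _ m ihm =>
        intro hℓ hm
        by_cases hc : ℓ = 0 ∨ ℓ = k ∨ m = 0 ∨ m = n + 1
        · exact hQbdry (i+1) ℓ m hℓ hm hc
        push_neg at hc
        obtain ⟨hc0, hck, hm0, hmn⟩ := hc
        obtain ⟨t, rfl⟩ : ∃ t, ℓ = t + 1 := ⟨ℓ - 1, by omega⟩
        have hdj := adjMinor_dj a t i (i + (m : ℤ))
        have hA : 0 < adjMinor a (t + 2) i (i + (m : ℤ)) :=
          hQi (t + 2) m (by omega) (by omega)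
        have hB : 0 < adjMinor a t (i + 1) (i + (m : ℤ) + 1) := by
          have e : i + (m : ℤ) + 1 = (i + 1) + (m : ℤ) := by ring
          rw [e]; exact ihℓ t (by omega) m (by omega) (by omega)
        have hC : 0 < adjMinor a (t + 1) i (i + (m : ℤ)) :=
          hQi (t + 1) m (by omega) (by omega)
        have hE : 0 < adjMinor a (t + 1) i (i + (m : ℤ) + 1) := by
          have e : i + (m : ℤ) + 1 = i + ((m + 1 : ℕ) : ℤ) := by push_cast; ring
          rw [e]; exact hQi (t + 1) (m + 1) (by omega) (by omega)
        have hF : 0 < adjMinor a (t + 1) (i + 1) (i + (m : ℤ)) := by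
          have e : i + (m : ℤ) = (i + 1) + ((m - 1 : ℕ) : ℤ) := by
            push_cast [Nat.cast_sub (by omega : 1 ≤ m)]; ring
          rw [e]; exact ihm (m - 1) (by omega) (by omega) (by omega)
        have e : (i + 1) + (m : ℤ) = i + (m : ℤ) + 1 := by ring
        rw [e]
        nlinarith [mul_pos hA hB, mul_pos hE hF]
  have hQdown : ∀ i : ℤ, Q (i + 1) → Q i := by
    intro i hQi1
    have key : ∀ d e ℓ m : ℕ, ℓ ≤ k → m ≤ n + 1 → k = ℓ + d → n + 1 = m + e →
        0 < adjMinor a ℓ i (i + (m : ℤ)) := by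
      intro d
      induction d using Nat.strong_induction_on with
      | _ d ihd =>
        intro e
        induction e using Nat.strong_induction_on with
        | _ e ihe =>
          intro ℓ m hℓ hm hd he
          by_cases hc : ℓ = 0 ∨ ℓ = k ∨ m = 0 ∨ m = n + 1
          · exact hQbdry i ℓ m hℓ hm hc
          push_neg at hc
          obtain ⟨hc0, hck, hm0, hmn⟩ := hc
          obtain ⟨t, rfl⟩ : ∃ t, ℓ = t + 1 := ⟨ℓ - 1, by omega⟩
          have hdj := adjMinor_dj a t i (i + (m : ℤ))
          have hA : 0 < adjMinor a (t + 2) i (i + (m : ℤ)) :=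
            ihd (d - 1) (by omega) e (t + 2) m (by omega) (by omega) (by omega) (by omega)
          have hB : 0 < adjMinor a t (i + 1) (i + (m : ℤ) + 1) := by
            have eq : i + (m : ℤ) + 1 = (i + 1) + (m : ℤ) := by ring
            rw [eq]; exact hQi1 t m (by omega) (by omega)
          have hD : 0 < adjMinor a (t + 1) (i + 1) (i + (m : ℤ) + 1) := by
            have eq : i + (m : ℤ) + 1 = (i + 1) + (m : ℤ) := by ring
            rw [eq]; exact hQi1 (t + 1) m (by omega) (by omega)
          have hE : 0 < adjMinor a (t + 1) i (i + (m : ℤ) + 1) := by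
            have eq : i + (m : ℤ) + 1 = i + ((m + 1 : ℕ) : ℤ) := by push_cast; ring
            rw [eq]
            exact ihe (e - 1) (by omega) (t + 1) (m + 1) (by omega) (by omega) (by omega)
              (by omega)
          have hF : 0 < adjMinor a (t + 1) (i + 1) (i + (m : ℤ)) := by
            have eq : i + (m : ℤ) = (i + 1) + ((m - 1 : ℕ) : ℤ) := by
              push_cast [Nat.cast_sub (by omega : 1 ≤ m)]; ring
            rw [eq]; exact hQi1 (t + 1) (m - 1) (by omega) (by omega)
          nlinarith [mul_pos hA hB, mul_pos hE hF]
    rw [hQdef]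
    intro ℓ m hℓ hm
    exact key (k - ℓ) (n + 1 - m) ℓ m hℓ hm (by omega) (by omega)
  -- base row and all rows
  have hQ1 : Q 1 := by
    rw [hQdef]
    intro ℓ m hℓ hm
    by_cases hc : ℓ = 0 ∨ ℓ = k ∨ m = 0 ∨ m = n + 1
    · exact hQbdry 1 ℓ m hℓ hm hc
    push_neg at hc
    obtain ⟨hc0, hck, hm0, hmn⟩ := hc
    exact hpos ℓ m (by omega) (by omega) (by omega) (by omega)
  have hQ : ∀ i : ℤ, Q i := by
    have h' : ∀ t : ℤ, Q (1 + t) := by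
      intro t
      induction t using Int.induction_on with
      | zero => simpa using hQ1
      | succ s ih =>
        have := hQup (1 + (s : ℤ)) ih
        have e : 1 + ((s : ℤ) + 1) = (1 + (s : ℤ)) + 1 := by ring
        rwa [e]
      | pred s ih =>
        have e : 1 + (-(s : ℤ) - 1) + 1 = 1 + -(s : ℤ) := by ring
        apply hQdown (1 + (-(s : ℤ) - 1))
        rwa [e]
    intro i
    have := h' (i - 1)
    have e : 1 + (i - 1) = i := by ring
    rwa [e] at this
  have part1 : ∀ (i : ℤ) (ℓ j : ℕ), 1 ≤ ℓ → ℓ ≤ k - 1 → 1 ≤ j → j ≤ n →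
      0 < adjMinor a ℓ i (i + (j : ℤ)) :=
    fun i ℓ j h1 h2 h3 h4 => hQ i ℓ j (by omega) (by omega)
  -- uniqueness of left null vectors with vanishing last coordinate
  have huniq : ∀ (i j : ℤ) (z : Fin (k+1) → ℝ),
      (∀ s : Fin k, ∑ r : Fin (k+1), z r * a (i + (r : ℤ)) (j + (s : ℤ)) = 0) →
      z (Fin.last k) = 0 → z = 0 := by
    intro i j z hz hzl
    set T : Matrix (Fin k) (Fin k) ℝ :=
      Matrix.of (fun r s : Fin k => a (i + (r : ℤ)) (j + (s : ℤ))) with hT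
    have hdT : T.det = 1 := hSL i j
    have hz' : (fun r : Fin k => z (Fin.castSucc r)) ᵥ* T = 0 := by
      funext s
      have h := hz s
      rw [Fin.sum_univ_castSucc] at h
      rw [hzl, zero_mul, add_zero] at h
      simpa [Matrix.vecMul, dotProduct, hT] using h
    have hz0 := vecMul_eq_zero_of_det_one T hdT _ hz'
    funext r
    refine Fin.lastCases ?_ ?_ r
    · simpa using hzl
    · intro q
      have := congrFun hz0 q
      simpa using this
  -- the (k+1)-minors vanish on the fundamental window
  have hvan : ∀ i j : ℤ, i ≤ j → j ≤ i + (n : ℤ) + 1 → adjMinor a (k+1) i j = 0 := by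
    intro i j h1 h2
    have hdj := adjMinor_dj a (k - 1) i j
    have e1 : k - 1 + 2 = k + 1 := by omega
    have e2 : k - 1 + 1 = k := by omega
    rw [e1, e2, hSL, hSL, hSL, hSL] at hdj
    norm_num at hdj
    have hppos : 0 < adjMinor a (k - 1) (i + 1) (j + 1) := by
      have hs : ((j - i).toNat : ℤ) = j - i := Int.toNat_of_nonneg (by omega)
      have e : j + 1 = (i + 1) + ((j - i).toNat : ℤ) := by omega
      rw [e]
      exact hQ (i + 1) (k - 1) (j - i).toNat (by omega) (by omega)
    exact hdj.resolve_right (ne_of_gt hppos)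
  -- every k+2 consecutive rows satisfy a global linear relation, normalized at the last row
  have hlam : ∀ i : ℤ, ∃ lam : Fin (k+1) → ℝ, lam (Fin.last k) = 1 ∧
      ∀ c : ℤ, ∑ r : Fin (k+1), lam r * a (i + (r : ℤ)) c = 0 := by
    intro i
    have hdet0 : (Matrix.of fun r s : Fin (k+1) =>
        a (i + (r : ℤ)) (i + (s : ℤ))).det = 0 := hvan i i le_rfl (by omega)
    obtain ⟨y, hy0, hyM⟩ := Matrix.exists_vecMul_eq_zero_iff.mpr hdet0
    have hcol : ∀ s : Fin (k+1), ∑ r : Fin (k+1), y r * a (i + (r : ℤ)) (i + (s : ℤ)) = 0 := by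
      intro s
      have h := congrFun hyM s
      simpa [Matrix.vecMul, dotProduct] using h
    have hyl : y (Fin.last k) ≠ 0 := by
      intro h
      apply hy0
      apply huniq i i y ?_ h
      intro s
      have h2 := hcol (Fin.castSucc s)
      simpa using h2
    set lam : Fin (k+1) → ℝ := fun r => (y (Fin.last k))⁻¹ * y r with hlamdef
    have hlaml : lam (Fin.last k) = 1 := inv_mul_cancel₀ hyl
    set v : ℤ → ℝ := fun c => ∑ r : Fin (k+1), lam r * a (i + (r : ℤ)) c with hvdef
    have hv0 : ∀ s : Fin (k+1), v (i + (s : ℤ)) = 0 := by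
      intro s
      show (∑ r : Fin (k+1), lam r * a (i + (r : ℤ)) (i + (s : ℤ))) = 0
      have : ∀ r : Fin (k+1), lam r * a (i + (r : ℤ)) (i + (s : ℤ))
          = (y (Fin.last k))⁻¹ * (y r * a (i + (r : ℤ)) (i + (s : ℤ))) := by
        intro r; rw [hlamdef]; ring
      rw [Finset.sum_congr rfl (fun r _ => this r), ← Finset.mul_sum, hcol s, mul_zero]
    have hwin0 : ∀ x : ℤ, i ≤ x → x ≤ i + (k : ℤ) → v x = 0 := by
      intro x hx1 hx2
      have hs : (x - i).toNat < k + 1 := by omega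
      have h := hv0 ⟨(x - i).toNat, hs⟩
      have e : i + ((⟨(x - i).toNat, hs⟩ : Fin (k+1)) : ℤ) = x := by
        simp only []
        have : (((x - i).toNat : ℕ) : ℤ) = x - i := Int.toNat_of_nonneg (by omega)
        omega
      rwa [e] at h
    have hstep : ∀ c : ℤ, i + (k : ℤ) ≤ c → c ≤ i + (n : ℤ) + (k : ℤ) →
        (∀ x : ℤ, i ≤ x → x ≤ c → v x = 0) → v (c + 1) = 0 := by
      intro c hc1 hc2 hvc
      set j : ℤ := c + 1 - (k : ℤ) with hj
      have hdet' : (Matrix.of fun r s : Fin (k+1) =>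
          a (i + (r : ℤ)) (j + (s : ℤ))).det = 0 := hvan i j (by omega) (by omega)
      obtain ⟨y', hy'0, hy'M⟩ := Matrix.exists_vecMul_eq_zero_iff.mpr hdet'
      have hcol' : ∀ s : Fin (k+1), ∑ r : Fin (k+1), y' r * a (i + (r : ℤ)) (j + (s : ℤ)) = 0 := by
        intro s
        have h := congrFun hy'M s
        simpa [Matrix.vecMul, dotProduct] using h
      have hy'l : y' (Fin.last k) ≠ 0 := by
        intro h
        apply hy'0
        apply huniq i j y' ?_ h
        intro s
        have h2 := hcol' (Fin.castSucc s)
        simpa using h2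
      have hlamcols : ∀ s : Fin k, ∑ r : Fin (k+1), lam r * a (i + (r : ℤ)) (j + (s : ℤ)) = 0 := by
        intro s
        have hsk : (s : ℕ) < k := s.isLt
        exact hvc (j + (s : ℤ)) (by omega) (by omega)
      have hu : (fun r => lam r - (y' (Fin.last k))⁻¹ * y' r) = 0 := by
        apply huniq i j _ ?_ ?_
        · intro s
          have h1 := hlamcols s
          have h2 := hcol' (Fin.castSucc s)
          have h2' : ∑ r : Fin (k+1), y' r * a (i + (r : ℤ)) (j + (s : ℤ)) = 0 := by
            simpa using h2
          have expand : ∀ r : Fin (k+1),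
              (lam r - (y' (Fin.last k))⁻¹ * y' r) * a (i + (r : ℤ)) (j + (s : ℤ))
              = lam r * a (i + (r : ℤ)) (j + (s : ℤ))
                - (y' (Fin.last k))⁻¹ * (y' r * a (i + (r : ℤ)) (j + (s : ℤ))) := by
            intro r; ring
          rw [Finset.sum_congr rfl (fun r _ => expand r), Finset.sum_sub_distrib,
            ← Finset.mul_sum, h1, h2', mul_zero, sub_zero]
        · show lam (Fin.last k) - (y' (Fin.last k))⁻¹ * y' (Fin.last k) = 0
          rw [hlaml, inv_mul_cancel₀ hy'l, sub_self]
      have hlam_eq : ∀ r, lam r = (y' (Fin.last k))⁻¹ * y' r := by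
        intro r
        have := congrFun hu r
        simp only [Pi.zero_apply] at this
        linarith
      show (∑ r : Fin (k+1), lam r * a (i + (r : ℤ)) (c + 1)) = 0
      have e : c + 1 = j + ((Fin.last k : Fin (k+1)) : ℤ) := by
        have : ((Fin.last k : Fin (k+1)) : ℤ) = (k : ℤ) := by simp
        omega
      rw [e]
      have : ∀ r : Fin (k+1), lam r * a (i + (r : ℤ)) (j + ((Fin.last k : Fin (k+1)) : ℤ))
          = (y' (Fin.last k))⁻¹ * (y' r * a (i + (r : ℤ)) (j + ((Fin.last k : Fin (k+1)) : ℤ))) := by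
        intro r; rw [hlam_eq r]; ring
      rw [Finset.sum_congr rfl (fun r _ => this r), ← Finset.mul_sum, hcol' (Fin.last k), mul_zero]
    have hwin : ∀ x : ℤ, i ≤ x → x ≤ i + N → v x = 0 := by
      have key : ∀ t : ℕ, t ≤ n + 1 → ∀ x : ℤ, i ≤ x → x ≤ i + (k : ℤ) + (t : ℤ) → v x = 0 := by
        intro t
        induction t with
        | zero => intro _ x h1 h2; exact hwin0 x h1 (by push_cast at h2; omega)
        | succ s ih =>
          intro hs x h1 h2
          by_cases hx : x ≤ i + (k : ℤ) + (s : ℤ)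
          · exact ih (by omega) x h1 hx
          · have hxe : x = (i + (k : ℤ) + (s : ℤ)) + 1 := by push_cast at h2 ⊢; omega
            rw [hxe]
            apply hstep (i + (k : ℤ) + (s : ℤ)) (by omega) (by omega)
            intro x' hx1 hx2
            exact ih (by omega) x' hx1 (by omega)
      intro x h1 h2
      exact key (n + 1) le_rfl x h1 (by push_cast; omega)
    have hvq : ∀ c : ℤ, v (c + N) = ε * v c := by
      intro c
      show (∑ r : Fin (k+1), lam r * a (i + (r : ℤ)) (c + N)) = ε * ∑ r : Fin (k+1), lam r * a (i + (r : ℤ)) c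
      rw [Finset.mul_sum]
      apply Finset.sum_congr rfl
      intro r _
      rw [hext]
      ring
    have hvall : ∀ c : ℤ, v c = 0 := by
      have hNpos : (0 : ℤ) < N := by rw [hN]; omega
      have key : ∀ q : ℤ, ∀ c : ℤ, i ≤ c → c ≤ i + N → v (c + N * q) = 0 := by
        intro q
        induction q using Int.induction_on with
        | zero => intro c h1 h2; simpa using hwin c h1 h2
        | succ s ih =>
          intro c h1 h2
          have e : c + N * ((s : ℤ) + 1) = (c + N * (s : ℤ)) + N := by ring
          rw [e, hvq, ih c h1 h2, mul_zero]
        | pred s ih =>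
          intro c h1 h2
          have h := hvq (c + N * (-(s : ℤ) - 1))
          have e : (c + N * (-(s : ℤ) - 1)) + N = c + N * (-(s : ℤ)) := by ring
          rw [e, ih c h1 h2] at h
          exact (mul_eq_zero.mp h.symm).resolve_left hεne
      intro c
      have hdm := Int.mul_ediv_add_emod (c - i) N
      have h1 : 0 ≤ (c - i) % N := Int.emod_nonneg _ (by omega)
      have h2 : (c - i) % N < N := Int.emod_lt_of_pos _ hNpos
      have e : c = (i + (c - i) % N) + N * ((c - i) / N) := by omega
      rw [e]
      exact key ((c - i) / N) (i + (c - i) % N) (by omega) (by omega)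
    exact ⟨lam, hlaml, hvall⟩
  -- tameness
  have part2 : ∀ i j : ℤ, adjMinor a (k + 1) i j = 0 := by
    intro i j
    obtain ⟨lam, hlaml, hlamv⟩ := hlam i
    show (Matrix.of fun r s : Fin (k+1) => a (i + (r : ℤ)) (j + (s : ℤ))).det = 0
    rw [← Matrix.exists_vecMul_eq_zero_iff]
    refine ⟨lam, ?_, ?_⟩
    · intro h
      rw [h] at hlaml
      simp at hlaml
    · funext s
      have h := hlamv (j + (s : ℤ))
      simpa [Matrix.vecMul, dotProduct] using h
  -- the first coefficient of the relation is nonzero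
  have hlam0 : ∀ (i : ℤ) (lam : Fin (k+1) → ℝ), lam (Fin.last k) = 1 →
      (∀ c : ℤ, ∑ r : Fin (k+1), lam r * a (i + (r : ℤ)) c = 0) → lam 0 ≠ 0 := by
    intro i lam hl hv h0
    have hz : (fun t : Fin k => lam (Fin.succ t)) ᵥ*
        (Matrix.of fun r s : Fin k => a ((i+1) + (r : ℤ)) ((i+1) + (s : ℤ))) = 0 := by
      funext s
      show (∑ t : Fin k, lam (Fin.succ t) * a ((i+1) + (t : ℤ)) ((i+1) + (s : ℤ))) = 0
      have h := hv ((i+1) + (s : ℤ))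
      rw [Fin.sum_univ_succ, h0, zero_mul, zero_add] at h
      have e : ∀ t : Fin k,
          lam (Fin.succ t) * a (i + ((Fin.succ t : Fin (k+1)) : ℤ)) ((i+1) + (s : ℤ))
          = lam (Fin.succ t) * a ((i+1) + (t : ℤ)) ((i+1) + (s : ℤ)) := by
        intro t
        congr 2
        push_cast [Fin.val_succ]
        ring
      rw [Finset.sum_congr rfl (fun t _ => e t)] at h
      exact h
    have hz0 := vecMul_eq_zero_of_det_one _ (hSL (i+1) (i+1)) _ hz
    have h := congrFun hz0 (⟨k - 1, by omega⟩ : Fin k)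
    have ht0 : Fin.succ (⟨k - 1, by omega⟩ : Fin k) = Fin.last k := by
      ext
      simp only [Fin.val_succ, Fin.val_last]
      omega
    rw [Pi.zero_apply] at h
    have h' : lam (Fin.succ (⟨k - 1, by omega⟩ : Fin k)) = 0 := h
    rw [ht0, hl] at h'
    norm_num at h'
  -- span of k consecutive rows
  set Row : ℤ → (ℤ → ℝ) := fun r => a r with hRow
  set V : ℤ → Submodule ℝ (ℤ → ℝ) := fun i =>
    Submodule.span ℝ (Set.range fun t : Fin k => Row (i + (t : ℤ))) with hV
  have hgen : ∀ (i : ℤ) (t : Fin k), Row (i + (t : ℤ)) ∈ V i :=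
    fun i t => Submodule.subset_span ⟨t, rfl⟩
  have hgen' : ∀ (i x : ℤ), i ≤ x → x < i + (k : ℤ) → Row x ∈ V i := by
    intro i x h1 h2
    have hlt : (x - i).toNat < k := by omega
    have h := hgen i ⟨(x - i).toNat, hlt⟩
    have e : i + (((⟨(x - i).toNat, hlt⟩ : Fin k) : ℕ) : ℤ) = x := by
      have : (((x - i).toNat : ℕ) : ℤ) = x - i := Int.toNat_of_nonneg (by omega)
      simp only [this]
      ring
    rwa [e] at h
  have hVsucc : ∀ i : ℤ, V i = V (i + 1) := by
    intro i
    obtain ⟨lam, hl, hv⟩ := hlam i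
    have h0 := hlam0 i lam hl hv
    have hrel : ∑ r : Fin (k+1), lam r • Row (i + (r : ℤ)) = (0 : ℤ → ℝ) := by
      funext c
      rw [Finset.sum_apply]
      simpa [hRow] using hv c
    apply le_antisymm
    · rw [hV]
      apply Submodule.span_le.mpr
      rintro f ⟨t, rfl⟩
      show Row (i + (t : ℤ)) ∈ V (i + 1)
      by_cases ht : (t : ℕ) = 0
      · have e0 : i + (t : ℤ) = i := by omega
        rw [e0]
        -- solve the relation for Row i
        have hsplit : lam 0 • Row i + ∑ t : Fin k, lam (Fin.succ t) • Row ((i+1) + (t : ℤ))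
            = (0 : ℤ → ℝ) := by
          rw [← hrel, Fin.sum_univ_succ]
          congr 1
          · norm_num
          · apply Finset.sum_congr rfl
            intro t _
            congr 2
            push_cast [Fin.val_succ]
            ring
        set S : ℤ → ℝ := ∑ t : Fin k, lam (Fin.succ t) • Row ((i+1) + (t : ℤ)) with hS
        have h1 : lam 0 • Row i = -S := eq_neg_of_add_eq_zero_left hsplit
        have hRowi : Row i = (-(lam 0)⁻¹) • S := by
          rw [← one_smul ℝ (Row i), ← inv_mul_cancel₀ h0, mul_smul, h1, smul_neg, ← neg_smul]
        rw [hRowi]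
        apply Submodule.smul_mem
        rw [hS]
        apply Submodule.sum_mem
        intro t _
        apply Submodule.smul_mem
        exact hgen (i+1) t
      · apply hgen' (i+1)
        · have := t.isLt
          omega
        · have := t.isLt
          omega
    · rw [hV]
      apply Submodule.span_le.mpr
      rintro f ⟨t, rfl⟩
      show Row ((i + 1) + (t : ℤ)) ∈ V i
      by_cases ht : (t : ℕ) = k - 1
      · have e0 : (i + 1) + (t : ℤ) = i + (k : ℤ) := by omega
        rw [e0]
        have hsplit : (∑ t : Fin k, lam (Fin.castSucc t) • Row (i + (t : ℤ)))
            + Row (i + (k : ℤ)) = (0 : ℤ → ℝ) := by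
          have e : i + (k : ℤ) = i + ((Fin.last k : Fin (k+1)) : ℤ) := by
            simp [Fin.val_last]
          rw [← hrel, Fin.sum_univ_castSucc, hl, one_smul, e]
          rfl
        have hRowk : Row (i + (k : ℤ))
            = - ∑ t : Fin k, lam (Fin.castSucc t) • Row (i + (t : ℤ)) := by
          rw [add_comm] at hsplit
          exact eq_neg_of_add_eq_zero_left hsplit
        rw [hRowk]
        apply Submodule.neg_mem
        apply Submodule.sum_mem
        intro t _
        apply Submodule.smul_mem
        exact hgen i t
      · apply hgen' i
        · have := t.isLt
          omega
        · have := t.isLt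
          omega
  have hVeq : ∀ i j : ℤ, V i = V j := by
    have key : ∀ d : ℤ, ∀ i : ℤ, V i = V (i + d) := by
      intro d
      induction d using Int.induction_on with
      | zero => intro i; simp
      | succ s ih =>
        intro i
        have e : i + ((s : ℤ) + 1) = (i + (s : ℤ)) + 1 := by ring
        rw [e, ← hVsucc, ← ih i]
      | pred s ih =>
        intro i
        have e : (i + (-(s : ℤ) - 1)) + 1 = i + (-(s : ℤ)) := by ring
        rw [hVsucc (i + (-(s : ℤ) - 1)), e, ← ih i]
    intro i j
    have := key (j - i) i
    have e : i + (j - i) = j := by ring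
    rwa [e] at this
  have hRowmem : ∀ j i : ℤ, Row j ∈ V i := by
    intro j i
    rw [hVeq i j]
    have := hgen j (⟨0, by omega⟩ : Fin k)
    have e : j + ((⟨0, by omega⟩ : Fin k) : ℤ) = j := by
      push_cast
      ring
    rwa [e] at this
  -- rows repeat with sign ε after N steps
  have hrowper : ∀ i c : ℤ, a (i + N) c = ε * a i c := by
    intro i c
    set base : ℤ := i + N - (k : ℤ) + 1 with hbase
    have hmem1 : Row (i + N) ∈ V base := by
      apply hgen' base (i + N) (by rw [hbase, hN]; omega) (by rw [hbase]; omega)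
    have hmem2 : Row i ∈ V base := hRowmem i base
    have hg : Row (i + N) - ε • Row i ∈ V base :=
      Submodule.sub_mem _ hmem1 (Submodule.smul_mem _ _ hmem2)
    rw [hV] at hg
    obtain ⟨cvec, hc⟩ := (Submodule.mem_span_range_iff_exists_fun ℝ).mp hg
    have hval : ∀ s : Fin k, (Row (i + N) - ε • Row i) (base + (s : ℤ)) = 0 := by
      intro s
      have hsk : (s : ℕ) < k := s.isLt
      simp only [Pi.sub_apply, Pi.smul_apply, smul_eq_mul, hRow]
      by_cases hs : (s : ℕ) = k - 1
      · have e1 : base + (s : ℤ) = i + N := by omega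
        rw [e1, hone, hext i i, hone, mul_one]
        linarith [hε2]
      · have h1 : a (i + N) (base + (s : ℤ)) = 0 := by
          apply hleft _ _ (by omega) (by omega)
        have h2 : a i (base + (s : ℤ)) = 0 := by
          apply hzero _ _ (by rw [hbase, hN]; omega) (by omega)
        rw [h1, h2, mul_zero, sub_zero]
    have hT : (Matrix.of fun r s : Fin k => a (base + (r : ℤ)) (base + (s : ℤ))).det = 1 :=
      hdiag k le_rfl base
    have hcv : cvec ᵥ* (Matrix.of fun r s : Fin k =>
        a (base + (r : ℤ)) (base + (s : ℤ))) = 0 := by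
      funext s
      show (∑ r : Fin k, cvec r * a (base + (r : ℤ)) (base + (s : ℤ))) = 0
      have h := congrFun hc (base + (s : ℤ))
      rw [Finset.sum_apply] at h
      rw [hval s] at h
      rw [← h]
      apply Finset.sum_congr rfl
      intro t _
      simp [hRow]
    have hcv0 := vecMul_eq_zero_of_det_one _ hT _ hcv
    have hzero' : Row (i + N) - ε • Row i = 0 := by
      rw [← hc]
      apply Finset.sum_eq_zero
      intro t _
      rw [congrFun hcv0 t]
      simp
    have h := congrFun hzero' c
    simp only [Pi.sub_apply, Pi.smul_apply, smul_eq_mul, Pi.zero_apply, hRow] at h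
    linarith
  have part3 : ∀ i j : ℤ, a (i + N) (j + N) = a i j := by
    intro i j
    rw [hrowper i (j + N), hext i j, ← mul_assoc, hε2, one_mul]
  exact ⟨part1, part2, part3⟩
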